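/- Let F be an entire function and k ≥ 2, L > 1, C > 1, N > 1 constants such that the maxima M_ℓ = max{|F(z)| : |z| = L^{k^ℓ}} satisfy M_n ≤ C·d·L^{N k^n} M_{n-1} for all n ≥ d. Then there exists b > 0 such that M_n ≤ L^{b k^n} for all n ≥ d. -/
import Mathlib


set_option maxHeartbeats 1000000 in
/-- If the maximum moduli `M ℓ` of an entire function `F` on the circles of radius
`L^{k^ℓ}` satisfy `M n ≤ C·d·L^{N k^n}·M (n-1)` for all `n ≥ d`, then there is a
`b > 0` with `M n ≤ L^{b k^n}` for all `n ≥ d`. -/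
theorem mahler_growth_bound
    (F : ℂ → ℂ) (hF : Differentiable ℂ F)
    (k : ℕ) (hk : 2 ≤ k) (d : ℕ) (hd : 1 ≤ d)
    (L C N : ℝ) (hL : 1 < L) (hC : 1 < C) (hN : 1 < N)
    (M : ℕ → ℝ)
    (hM : ∀ ℓ : ℕ, IsGreatest {y : ℝ | ∃ z : ℂ, ‖z‖ = L ^ (k ^ ℓ) ∧ y = ‖F z‖} (M ℓ))
    (hrec : ∀ n : ℕ, d ≤ n → M n ≤ C * d * L ^ (N * (k : ℝ) ^ n) * M (n - 1)) :
    ∃ b : ℝ, 0 < b ∧ ∀ n : ℕ, d ≤ n → M n ≤ L ^ (b * (k : ℝ) ^ n) := by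
  set b : ℝ := 2*N + Real.logb L (C*d) + Real.logb L (max (M d) 1) + 1 with hb
  clear_value b
  have hL0 : (0:ℝ) < L := lt_trans one_pos hL
  have hd1 : (1:ℝ) ≤ (d:ℝ) := by exact_mod_cast hd
  have hCd : (1:ℝ) ≤ C * d := by nlinarith
  have hlog1 : 0 ≤ Real.logb L (C*d) := Real.logb_nonneg hL hCd
  have hlog2 : 0 ≤ Real.logb L (max (M d) 1) := Real.logb_nonneg hL (le_max_right _ _)
  have hbN : 2*N + 1 ≤ b := by nlinarith
  have hbpos : 0 < b := by nlinarith
  have hk1 : (1:ℝ) ≤ (k:ℝ) := by exact_mod_cast Nat.one_le_of_lt hk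
  have hk2 : (2:ℝ) ≤ (k:ℝ) := by exact_mod_cast hk
  refine ⟨b, hbpos, ?_⟩
  intro n hn
  induction n, hn using Nat.le_induction with
  | base =>
    have hkd : (1:ℝ) ≤ (k:ℝ) ^ d := one_le_pow₀ hk1
    calc M d ≤ max (M d) 1 := le_max_left _ _
      _ = L ^ Real.logb L (max (M d) 1) :=
        (Real.rpow_logb hL0 (ne_of_gt hL) (lt_of_lt_of_le one_pos (le_max_right _ _))).symm
      _ ≤ L ^ (b * (k:ℝ)^d) := by
        apply (Real.rpow_le_rpow_left_iff hL).mpr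
        nlinarith
  | succ n hn ih =>
    have h1 := hrec (n+1) (le_trans hn (Nat.le_succ n))
    simp only [Nat.add_sub_cancel] at h1
    have hfac : 0 ≤ C * d * L ^ (N * (k:ℝ)^(n+1)) := by positivity
    have h2 : M (n+1) ≤ C * d * L ^ (N * (k:ℝ)^(n+1)) * L ^ (b * (k:ℝ)^n) :=
      h1.trans (mul_le_mul_of_nonneg_left ih hfac)
    refine h2.trans ?_
    have hK : (1:ℝ) ≤ (k:ℝ)^n := one_le_pow₀ hk1
    have hE : b - 2*N ≤ b * (k:ℝ)^(n+1) - N * (k:ℝ)^(n+1) - b * (k:ℝ)^n := by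
      have hpow : (k:ℝ)^(n+1) = (k:ℝ) * (k:ℝ)^n := by ring
      nlinarith [mul_nonneg (by nlinarith : (0:ℝ) ≤ b - 2*N) (by nlinarith : (0:ℝ) ≤ (k:ℝ)^n - 1),
        mul_nonneg (by nlinarith : (0:ℝ) ≤ b - N) (mul_nonneg (by nlinarith : (0:ℝ) ≤ (k:ℝ) - 2) (by nlinarith : (0:ℝ) ≤ (k:ℝ)^n))]
    have hCdle : C * d ≤ L ^ (b * (k:ℝ)^(n+1) - N * (k:ℝ)^(n+1) - b * (k:ℝ)^n) := by
      have h3 : C * d = L ^ Real.logb L (C*d) :=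
        (Real.rpow_logb hL0 (ne_of_gt hL) (lt_of_lt_of_le one_pos hCd)).symm
      rw [h3]
      apply (Real.rpow_le_rpow_left_iff hL).mpr
      linarith
    calc C * d * L ^ (N * (k:ℝ)^(n+1)) * L ^ (b * (k:ℝ)^n)
        ≤ L ^ (b * (k:ℝ)^(n+1) - N * (k:ℝ)^(n+1) - b * (k:ℝ)^n) * L ^ (N * (k:ℝ)^(n+1)) * L ^ (b * (k:ℝ)^n) := by
          gcongr
      _ = L ^ (b * (k:ℝ)^(n+1)) := by
          rw [← Real.rpow_add hL0, ← Real.rpow_add hL0]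
          congr 1
          ring
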